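/- Assume the invariant setting with S_A ≠ ∅ and L_B \ S_B ≠ ∅, and write p_A = max S_A and q_B = min(L_B \ S_B). Assume a_A < p_A, q_B < a_B, and q_B is less than every element of L_A \ S_A (case 3 of the case analysis). Then: S'_A = S_A \ {a_A}; S'_B = S_B; q_B is the B-side peek, i.e. q_B = min((L_B ∪ {a_B}) \ S'_B), and q_B is less than every element of (L_A \ {a_A}) \ S'_A; and H_h(L') = (H_h(L_A ∪ L_B) \ {a_A}) ∪ {q_B} = S'_A ∪ S_B ∪ {q_B}. -/

import Mathlib

/-- `smallSet m L` is `H_m(L)`: the set of the `m` smallest elements of the finset `L`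
(the first `m` entries of the increasing enumeration of `L`). -/
def smallSet {α : Type*} [LinearOrder α] (m : ℕ) (L : Finset α) : Finset α :=
  ((L.sort (· ≤ ·)).take m).toFinset


lemma smallSet_subset {α : Type*} [LinearOrder α] (m : ℕ) (L : Finset α) :
    smallSet m L ⊆ L := by
  intro x hx
  simp only [smallSet, List.mem_toFinset] at hx
  have := List.mem_of_mem_take hx
  rwa [Finset.mem_sort] at this

lemma smallSet_card {α : Type*} [LinearOrder α] (m : ℕ) (L : Finset α) (hm : m ≤ L.card) :
    (smallSet m L).card = m := by
  have hnd : ((L.sort (· ≤ ·)).take m).Nodup :=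
    (List.take_sublist m _).nodup (L.sort_nodup _)
  rw [smallSet, List.toFinset_card_of_nodup hnd, List.length_take, Finset.length_sort,
    min_eq_left hm]

lemma smallSet_lt {α : Type*} [LinearOrder α] {m : ℕ} {L : Finset α}
    {x y : α} (hx : x ∈ smallSet m L) (hy : y ∈ L) (hy' : y ∉ smallSet m L) : x < y := by
  have hp : (L.sort (· ≤ ·)).Pairwise (· < ·) := L.sortedLT_sort.pairwise
  rw [← List.take_append_drop m (L.sort (· ≤ ·)), List.pairwise_append] at hp
  simp only [smallSet, List.mem_toFinset] at hx hy'
  have hyl : y ∈ (L.sort (· ≤ ·)).take m ++ (L.sort (· ≤ ·)).drop m := by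
    rw [List.take_append_drop]; rwa [Finset.mem_sort]
  rcases List.mem_append.mp hyl with hh | hh
  · exact absurd hh hy'
  · exact hp.2.2 x hx y hh

lemma smallSet_eq {α : Type*} [LinearOrder α] {m : ℕ} {L S : Finset α}
    (hS : S ⊆ L) (hcard : S.card = m)
    (hsep : ∀ x ∈ S, ∀ y ∈ L \ S, x < y) : smallSet m L = S := by
  have hm : m ≤ L.card := hcard ▸ Finset.card_le_card hS
  have hc : (smallSet m L).card = m := smallSet_card m L hm
  have hsub : smallSet m L ⊆ S := by
    intro x hx
    by_contra hxS
    have hSd : (S \ smallSet m L).Nonempty := by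
      rw [Finset.sdiff_nonempty]
      intro hsub
      have : S = smallSet m L := Finset.eq_of_subset_of_card_le hsub (by omega)
      exact hxS (this ▸ hx)
    obtain ⟨y, hy⟩ := hSd
    rw [Finset.mem_sdiff] at hy
    have hlt1 : x < y := smallSet_lt hx (hS hy.1) hy.2
    have hlt2 : y < x := hsep y hy.1 x (Finset.mem_sdiff.mpr ⟨smallSet_subset m L hx, hxS⟩)
    exact absurd hlt1 (lt_asymm hlt2)
  exact Finset.eq_of_subset_of_card_le hsub (by omega)

/-- case 3 of the case analysis.  Invariant setting: `L_A, L_B` disjoint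
with `|L_A| + |L_B| = 2h+1`, `S_A ⊆ L_A`, `S_B ⊆ L_B`, `S_A ∪ S_B = H_h(L_A ∪ L_B)`,
`a_A ∈ L_A`, `a_B ∉ L_A ∪ L_B`; `L' = (L_A \ {a_A}) ∪ L_B ∪ {a_B}`; updated small sets
`S'_A = H_{|S_A|-1}(L_A \ {a_A})` and `S'_B = H_{|S_B|}(L_B ∪ {a_B})`.
Assume `S_A ≠ ∅`, `L_B \ S_B ≠ ∅`, `a_A < p_A = max S_A`, `q_B = min(L_B \ S_B) < a_B`,
and `q_B` is less than every element of `L_A \ S_A`.  Then `S'_A = S_A \ {a_A}`,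
`S'_B = S_B`, `q_B` is the B-side peek (`q_B = min((L_B ∪ {a_B}) \ S'_B)`) and is less
than every element of `(L_A \ {a_A}) \ S'_A`, and
`H_h(L') = (H_h(L_A ∪ L_B) \ {a_A}) ∪ {q_B} = S'_A ∪ S_B ∪ {q_B}`. -/
theorem invariant_case3 {α : Type*} [LinearOrder α] (h : ℕ)
    (LA LB SA SB : Finset α) (hdisj : Disjoint LA LB)
    (hcard : LA.card + LB.card = 2 * h + 1)
    (hSA : SA ⊆ LA) (hSB : SB ⊆ LB)
    (hinv : SA ∪ SB = smallSet h (LA ∪ LB))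
    (aA aB : α) (haA : aA ∈ LA) (haB : aB ∉ LA ∪ LB)
    (hSAne : SA.Nonempty) (hQBne : (LB \ SB).Nonempty)
    (h1 : aA < SA.max' hSAne)
    (h2 : (LB \ SB).min' hQBne < aB)
    (h3 : ∀ x ∈ LA \ SA, (LB \ SB).min' hQBne < x) :
    smallSet (SA.card - 1) (LA \ {aA}) = SA \ {aA} ∧
    smallSet SB.card (LB ∪ {aB}) = SB ∧
    ((LB ∪ {aB}) \ smallSet SB.card (LB ∪ {aB})).min = ((LB \ SB).min' hQBne : WithTop α) ∧
    (∀ x ∈ (LA \ {aA}) \ smallSet (SA.card - 1) (LA \ {aA}), (LB \ SB).min' hQBne < x) ∧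
    smallSet h ((LA \ {aA}) ∪ LB ∪ {aB}) =
      (smallSet h (LA ∪ LB) \ {aA}) ∪ {(LB \ SB).min' hQBne} ∧
    smallSet h ((LA \ {aA}) ∪ LB ∪ {aB}) =
      smallSet (SA.card - 1) (LA \ {aA}) ∪ SB ∪ {(LB \ SB).min' hQBne} := by
  set qB := (LB \ SB).min' hQBne with hqBdef
  have hqB : qB ∈ LB \ SB := Finset.min'_mem _ _
  rw [Finset.mem_sdiff] at hqB
  have haAB : aA ∉ LB := Finset.disjoint_left.mp hdisj haA
  have haBA : aB ∉ LA := fun hx => haB (Finset.mem_union_left _ hx)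
  have haBB : aB ∉ LB := fun hx => haB (Finset.mem_union_right _ hx)
  have hcardU : (LA ∪ LB).card = 2 * h + 1 := by
    rw [Finset.card_union_of_disjoint hdisj, hcard]
  -- fundamental separation property from the invariant
  have hsep0 : ∀ x ∈ SA ∪ SB, ∀ y ∈ (LA ∪ LB) \ (SA ∪ SB), x < y := by
    intro x hx y hy
    rw [Finset.mem_sdiff] at hy
    rw [hinv] at hx hy
    exact smallSet_lt hx hy.1 hy.2
  have hdisjS : Disjoint SA SB := hdisj.mono hSA hSB
  have hcardS : SA.card + SB.card = h := by
    have := smallSet_card h (LA ∪ LB) (by omega)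
    rw [← hinv, Finset.card_union_of_disjoint hdisjS] at this
    exact this
  -- qB is above everything in SA ∪ SB
  have hqBbig : ∀ x ∈ SA ∪ SB, x < qB := by
    intro x hx
    exact hsep0 x hx qB (Finset.mem_sdiff.mpr ⟨Finset.mem_union_right _ hqB.1,
      fun hc => by
        rcases Finset.mem_union.mp hc with hc | hc
        · exact (Finset.disjoint_left.mp hdisj (hSA hc)) hqB.1
        · exact hqB.2 hc⟩)
  -- aA ∈ SA
  have haASA : aA ∈ SA := by
    by_contra hc
    have haAc : aA ∈ (LA ∪ LB) \ (SA ∪ SB) := by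
      rw [Finset.mem_sdiff]
      refine ⟨Finset.mem_union_left _ haA, fun hm => ?_⟩
      rcases Finset.mem_union.mp hm with hm | hm
      · exact hc hm
      · exact haAB (hSB hm)
    have := hsep0 _ (Finset.mem_union_left _ (SA.max'_mem hSAne)) aA haAc
    exact absurd h1 (lt_asymm this)
  have hSAc : 1 ≤ SA.card := Finset.card_pos.mpr hSAne
  -- Goal 1
  have g1 : smallSet (SA.card - 1) (LA \ {aA}) = SA \ {aA} := by
    apply smallSet_eq
    · exact fun x hx => by
        rw [Finset.mem_sdiff, Finset.mem_singleton] at hx ⊢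
        exact ⟨hSA hx.1, hx.2⟩
    · rw [Finset.card_sdiff_of_subset (Finset.singleton_subset_iff.mpr haASA), Finset.card_singleton]
    · intro x hx y hy
      simp only [Finset.mem_sdiff, Finset.mem_singleton] at hx hy
      have hyc : y ∈ (LA ∪ LB) \ (SA ∪ SB) := by
        rw [Finset.mem_sdiff]
        refine ⟨Finset.mem_union_left _ hy.1.1, fun hm => ?_⟩
        rcases Finset.mem_union.mp hm with hm | hm
        · exact hy.2 ⟨hm, hy.1.2⟩
        · exact Finset.disjoint_left.mp hdisj hy.1.1 (hSB hm)
      exact hsep0 x (Finset.mem_union_left _ hx.1) y hyc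
  -- Goal 2
  have g2 : smallSet SB.card (LB ∪ {aB}) = SB := by
    apply smallSet_eq
    · exact fun x hx => Finset.mem_union_left _ (hSB hx)
    · rfl
    · intro x hx y hy
      simp only [Finset.mem_sdiff, Finset.mem_union, Finset.mem_singleton] at hy
      rcases hy.1 with hyB | hyB
      · have hyc : y ∈ (LA ∪ LB) \ (SA ∪ SB) := by
          rw [Finset.mem_sdiff]
          refine ⟨Finset.mem_union_right _ hyB, fun hm => ?_⟩
          rcases Finset.mem_union.mp hm with hm | hm
          · exact Finset.disjoint_left.mp hdisj (hSA hm) hyB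
          · exact hy.2 hm
        exact hsep0 x (Finset.mem_union_right _ hx) y hyc
      · subst hyB
        exact lt_trans (hqBbig x (Finset.mem_union_right _ hx)) h2
  -- Goal 3
  have g3 : ((LB ∪ {aB}) \ smallSet SB.card (LB ∪ {aB})).min = (qB : WithTop α) := by
    rw [g2]
    have hT : (LB \ SB) ∪ {aB} = (LB ∪ {aB}) \ SB := by
      ext x
      simp only [Finset.mem_sdiff, Finset.mem_union, Finset.mem_singleton]
      constructor
      · rintro (⟨hx, hx2⟩ | rfl)
        · exact ⟨Or.inl hx, hx2⟩
        · exact ⟨Or.inr rfl, fun hc => haBB (hSB hc)⟩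
      · rintro ⟨hx | rfl, hx2⟩
        · exact Or.inl ⟨hx, hx2⟩
        · exact Or.inr rfl
    rw [← hT]
    have hTne : ((LB \ SB) ∪ {aB}).Nonempty := ⟨aB, by simp⟩
    rw [← Finset.coe_min' hTne]
    congr 1
    apply le_antisymm
    · exact Finset.min'_le _ _ (Finset.mem_union_left _ (Finset.min'_mem _ _))
    · apply Finset.le_min'
      intro y hy
      rcases Finset.mem_union.mp hy with hy | hy
      · exact Finset.min'_le _ _ hy
      · rw [Finset.mem_singleton] at hy; subst hy; exact le_of_lt h2
  -- Goal 4
  have g4 : ∀ x ∈ (LA \ {aA}) \ smallSet (SA.card - 1) (LA \ {aA}), qB < x := by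
    rw [g1]
    intro x hx
    simp only [Finset.mem_sdiff, Finset.mem_singleton] at hx
    exact h3 x (Finset.mem_sdiff.mpr ⟨hx.1.1, fun hc => hx.2 ⟨hc, hx.1.2⟩⟩)
  -- Goals 5,6: compute smallSet h of the new list
  have hmain : smallSet h ((LA \ {aA}) ∪ LB ∪ {aB}) = (SA \ {aA}) ∪ SB ∪ {qB} := by
    apply smallSet_eq
    · intro x hx
      simp only [Finset.mem_union, Finset.mem_singleton] at hx ⊢
      rcases hx with (hx | hx) | rfl
      · exact Or.inl (Or.inl (Finset.mem_sdiff.mpr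
          ⟨hSA (Finset.mem_sdiff.mp hx).1, (Finset.mem_sdiff.mp hx).2⟩))
      · exact Or.inl (Or.inr (hSB hx))
      · exact Or.inl (Or.inr hqB.1)
    · have hd1 : Disjoint (SA \ {aA}) SB := (hdisjS.mono_left (Finset.sdiff_subset))
      have hd2 : Disjoint ((SA \ {aA}) ∪ SB) ({qB} : Finset α) := by
        rw [Finset.disjoint_singleton_right, Finset.mem_union]
        rintro (hc | hc)
        · exact Finset.disjoint_left.mp hdisj (hSA (Finset.mem_sdiff.mp hc).1) hqB.1
        · exact hqB.2 hc
      rw [Finset.card_union_of_disjoint hd2, Finset.card_union_of_disjoint hd1,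
        Finset.card_sdiff_of_subset (Finset.singleton_subset_iff.mpr haASA),
        Finset.card_singleton, Finset.card_singleton]
      omega
    · intro x hx y hy
      rw [Finset.mem_sdiff] at hy
      have hxle : x ≤ qB := by
        simp only [Finset.mem_union, Finset.mem_singleton] at hx
        rcases hx with (hx | hx) | rfl
        · exact le_of_lt (hqBbig x (Finset.mem_union_left _ (Finset.mem_sdiff.mp hx).1))
        · exact le_of_lt (hqBbig x (Finset.mem_union_right _ hx))
        · exact le_refl _
      have hqBy : qB < y := by
        obtain ⟨hyL, hyS⟩ := hy
        simp only [Finset.mem_union, Finset.mem_singleton, not_or] at hyS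
        simp only [Finset.mem_union, Finset.mem_singleton, Finset.mem_sdiff] at hyL
        rcases hyL with (⟨hyA, hyne⟩ | hyB) | rfl
        · refine h3 y (Finset.mem_sdiff.mpr ⟨hyA, fun hc => ?_⟩)
          exact hyS.1.1 (Finset.mem_sdiff.mpr ⟨hc, Finset.notMem_singleton.mpr hyne⟩)
        · have : qB ≤ y := Finset.min'_le _ _ (Finset.mem_sdiff.mpr ⟨hyB, hyS.1.2⟩)
          exact lt_of_le_of_ne this (Ne.symm hyS.2)
        · exact h2
      exact lt_of_le_of_lt hxle hqBy
  have hrw : (SA ∪ SB) \ {aA} = (SA \ {aA}) ∪ SB := by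
    ext x
    simp only [Finset.mem_sdiff, Finset.mem_union, Finset.mem_singleton]
    constructor
    · rintro ⟨hx | hx, hne⟩
      · exact Or.inl ⟨hx, hne⟩
      · exact Or.inr hx
    · rintro (⟨hx, hne⟩ | hx)
      · exact ⟨Or.inl hx, hne⟩
      · exact ⟨Or.inr hx, fun hc => haAB (hSB (hc ▸ hx))⟩
  refine ⟨g1, g2, g3, g4, ?_, ?_⟩
  · rw [hmain, ← hinv, hrw]
  · rw [hmain, g1]
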